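/- Let γ > 1, 0 ≤ r₁ < r₂ < ∞ (with r₁ > 0 if γ < 2), and v > 0. Then there exists a constant C depending only on r₁, r₂, v, γ such that for all ρ, R ∈ [r₁, r₂] and all vectors u, U ∈ ℝᵈ with |u|, |U| ≤ v, one has |B(R,U;ρ,u)| ≤ C · A(R,U;ρ,u), where A(R,U;ρ,u) = ½ ρ|u-U|² + R^γ - (γ/(γ-1)) ρ R^(γ-1) + (1/(γ-1)) ρ^γ and B(R,U;ρ,u) = ½ ρ|u-U|² u - (γ/(γ-1))(R^(γ-1) - ρ^(γ-1)) ρ u + (R^γ - ρ^γ) U. -/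

import Mathlib

open Real Set

private lemma rpow_sub_one_mul {x : ℝ} (hx : 0 ≤ x) {γ : ℝ} (hγ : 1 < γ) :
    x ^ (γ - 1) * x = x ^ γ := by
  rcases eq_or_lt_of_le hx with h | h
  · rw [← h, Real.zero_rpow (by linarith), Real.zero_rpow (by linarith), zero_mul]
  · rw [← Real.rpow_add_one h.ne']
    norm_num

private lemma lip_aux (γ r₁ r₂ : ℝ) (hγ : 1 < γ) (hr₁ : 0 ≤ r₁) (hr₂ : 0 < r₂)
    (hvac : γ < 2 → 0 < r₁) :
    ∀ x ∈ Icc r₁ r₂, ∀ y ∈ Icc r₁ r₂,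
      |y ^ (γ - 1) - x ^ (γ - 1)| ≤ ((γ - 1) * max (r₁ ^ (γ - 2)) (r₂ ^ (γ - 2))) * |y - x| := by
  intro x hx y hy
  have hconv : Convex ℝ (Icc r₁ r₂) := convex_Icc _ _
  have hderiv : ∀ z ∈ Icc r₁ r₂,
      HasDerivWithinAt (fun t : ℝ => t ^ (γ - 1)) ((γ - 1) * z ^ (γ - 2)) (Icc r₁ r₂) z := by
    intro z hz
    have h : z ≠ 0 ∨ 1 ≤ γ - 1 := by
      rcases le_or_gt 2 γ with h2 | h2
      · exact Or.inr (by linarith)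
      · exact Or.inl (ne_of_gt (lt_of_lt_of_le (hvac h2) hz.1))
    have := Real.hasDerivAt_rpow_const (x := z) (p := γ - 1) h
    rw [show γ - 1 - 1 = γ - 2 by ring] at this
    exact this.hasDerivWithinAt
  have hbound : ∀ z ∈ Icc r₁ r₂,
      ‖(γ - 1) * z ^ (γ - 2)‖ ≤ (γ - 1) * max (r₁ ^ (γ - 2)) (r₂ ^ (γ - 2)) := by
    intro z hz
    have hz0 : 0 ≤ z := le_trans hr₁ hz.1
    rw [Real.norm_eq_abs,
      abs_of_nonneg (mul_nonneg (by linarith) (Real.rpow_nonneg hz0 _))]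
    apply mul_le_mul_of_nonneg_left _ (by linarith : (0:ℝ) ≤ γ - 1)
    rcases le_or_gt 2 γ with h2 | h2
    · exact le_trans (Real.rpow_le_rpow hz0 hz.2 (by linarith)) (le_max_right _ _)
    · have hr₁pos := hvac h2
      exact le_trans (Real.rpow_le_rpow_of_nonpos hr₁pos hz.1 (by linarith)) (le_max_left _ _)
  have := hconv.norm_image_sub_le_of_norm_hasDerivWithin_le hderiv hbound hx hy
  simpa [Real.norm_eq_abs] using this

private lemma key_aux (γ r₁ r₂ : ℝ) (hγ : 1 < γ) (hr₁ : 0 ≤ r₁) (hr₁₂ : r₁ < r₂)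
    (hvac : γ < 2 → 0 < r₁) :
    ∃ C₂ : ℝ, 0 < C₂ ∧ ∀ ρ ∈ Icc r₁ r₂, ∀ R ∈ Icc r₁ r₂,
      ρ * (R ^ (γ - 1) - ρ ^ (γ - 1)) ^ 2 ≤
        C₂ * (R ^ γ - γ / (γ - 1) * ρ * R ^ (γ - 1) + 1 / (γ - 1) * ρ ^ γ) := by
  have hr₂ : 0 < r₂ := lt_of_le_of_lt hr₁ hr₁₂
  have hγ1 : (0:ℝ) < γ - 1 := by linarith
  have hγ0 : (0:ℝ) < γ := by linarith
  set L : ℝ := (γ - 1) * max (r₁ ^ (γ - 2)) (r₂ ^ (γ - 2)) with hL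
  have hLpos : 0 < L := by
    apply mul_pos hγ1
    exact lt_max_of_lt_right (Real.rpow_pos_of_pos hr₂ _)
  refine ⟨2 * (γ - 1) / γ * r₂ * L, by positivity, ?_⟩
  intro ρ hρ R hR
  set C₂ : ℝ := 2 * (γ - 1) / γ * r₂ * L with hC₂
  have hC₂pos : 0 < C₂ := by positivity
  have hρ0 : 0 ≤ ρ := le_trans hr₁ hρ.1
  set F : ℝ → ℝ := fun t =>
    C₂ * (t ^ γ - γ / (γ - 1) * ρ * t ^ (γ - 1) + 1 / (γ - 1) * ρ ^ γ)
      - ρ * (t ^ (γ - 1) - ρ ^ (γ - 1)) ^ 2 with hF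
  have hmul := rpow_sub_one_mul hρ0 hγ
  have hF0 : F ρ = 0 := by
    simp only [hF]
    rw [show ρ ^ γ - γ / (γ - 1) * ρ * ρ ^ (γ - 1) + 1 / (γ - 1) * ρ ^ γ
        = (1 + 1 / (γ - 1)) * ρ ^ γ - γ / (γ - 1) * (ρ ^ (γ - 1) * ρ) by ring, hmul]
    field_simp
    ring
  have hcont : Continuous F := by
    have c1 : Continuous fun t : ℝ => t ^ γ := Real.continuous_rpow_const (by linarith)
    have c2 : Continuous fun t : ℝ => t ^ (γ - 1) := Real.continuous_rpow_const (by linarith)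
    exact (continuous_const.mul ((c1.sub (continuous_const.mul c2)).add continuous_const)).sub
      (continuous_const.mul ((c2.sub continuous_const).pow 2))
  have hderiv : ∀ x : ℝ, 0 < x → HasDerivAt F
      (C₂ * (γ * x ^ (γ - 1) - γ / (γ - 1) * ρ * ((γ - 1) * x ^ (γ - 2)))
        - ρ * ((2:ℕ) * (x ^ (γ - 1) - ρ ^ (γ - 1)) ^ 1 * ((γ - 1) * x ^ (γ - 2)))) x := by
    intro x hx
    have h1 : HasDerivAt (fun t : ℝ => t ^ γ) (γ * x ^ (γ - 1)) x :=
      Real.hasDerivAt_rpow_const (x := x) (p := γ) (Or.inl hx.ne')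
    have h2 : HasDerivAt (fun t : ℝ => t ^ (γ - 1)) ((γ - 1) * x ^ (γ - 2)) x := by
      have := Real.hasDerivAt_rpow_const (x := x) (p := γ - 1) (Or.inl hx.ne')
      rwa [show γ - 1 - 1 = γ - 2 by ring] at this
    exact (((h1.sub (h2.const_mul (γ / (γ - 1) * ρ))).add_const _).const_mul C₂).sub
      (((h2.sub_const _).pow 2).const_mul ρ)
  have hfact : ∀ x : ℝ, 0 < x →
      C₂ * (γ * x ^ (γ - 1) - γ / (γ - 1) * ρ * ((γ - 1) * x ^ (γ - 2)))
        - ρ * ((2:ℕ) * (x ^ (γ - 1) - ρ ^ (γ - 1)) ^ 1 * ((γ - 1) * x ^ (γ - 2)))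
      = x ^ (γ - 2) * (C₂ * γ * (x - ρ)
          - 2 * (γ - 1) * (ρ * (x ^ (γ - 1) - ρ ^ (γ - 1)))) := by
    intro x hx
    have hx1 : x ^ (γ - 2) * x = x ^ (γ - 1) := by
      rw [← Real.rpow_add_one hx.ne']; congr 1; ring
    have hdd : γ / (γ - 1) * (γ - 1) = γ := by field_simp
    push_cast
    linear_combination (-(C₂ * γ)) * hx1 - C₂ * ρ * x ^ (γ - 2) * hdd
  have hsign_pos : ∀ x ∈ interior (Icc ρ r₂), 0 ≤ deriv F x := by
    intro x hx
    rw [interior_Icc] at hx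
    have hxpos : 0 < x := lt_of_le_of_lt hρ0 hx.1
    rw [(hderiv x hxpos).deriv, hfact x hxpos]
    have hxI : x ∈ Icc r₁ r₂ := ⟨le_trans hρ.1 hx.1.le, hx.2.le⟩
    have hΔnn : 0 ≤ x ^ (γ - 1) - ρ ^ (γ - 1) := by
      have := Real.rpow_le_rpow hρ0 hx.1.le (by linarith : (0:ℝ) ≤ γ - 1)
      linarith
    have hlip := lip_aux γ r₁ r₂ hγ hr₁ hr₂ hvac ρ hρ x hxI
    rw [abs_of_nonneg hΔnn, abs_of_nonneg (by linarith [hx.1] : (0:ℝ) ≤ x - ρ)] at hlip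
    apply mul_nonneg (Real.rpow_nonneg hxpos.le _)
    have h1 : ρ * (x ^ (γ - 1) - ρ ^ (γ - 1)) ≤ r₂ * (L * (x - ρ)) :=
      mul_le_mul hρ.2 hlip hΔnn (le_of_lt hr₂)
    have hC₂γ : C₂ * γ = 2 * (γ - 1) * (r₂ * L) := by
      rw [hC₂]; field_simp
    rw [hC₂γ]
    nlinarith [h1, hγ1]
  have hsign_neg : ∀ x ∈ interior (Icc r₁ ρ), deriv F x ≤ 0 := by
    intro x hx
    rw [interior_Icc] at hx
    have hxpos : 0 < x := lt_of_le_of_lt hr₁ hx.1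
    rw [(hderiv x hxpos).deriv, hfact x hxpos]
    have hxI : x ∈ Icc r₁ r₂ := ⟨hx.1.le, le_trans hx.2.le hρ.2⟩
    have hΔnp : x ^ (γ - 1) - ρ ^ (γ - 1) ≤ 0 := by
      have := Real.rpow_le_rpow hxpos.le hx.2.le (by linarith : (0:ℝ) ≤ γ - 1)
      linarith
    have hlip := lip_aux γ r₁ r₂ hγ hr₁ hr₂ hvac x hxI ρ hρ
    rw [abs_of_nonneg (by linarith : (0:ℝ) ≤ ρ ^ (γ - 1) - x ^ (γ - 1)),
      abs_of_nonneg (by linarith [hx.2] : (0:ℝ) ≤ ρ - x)] at hlip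
    apply mul_nonpos_of_nonneg_of_nonpos (Real.rpow_nonneg hxpos.le _)
    have h1 : ρ * (ρ ^ (γ - 1) - x ^ (γ - 1)) ≤ r₂ * (L * (ρ - x)) :=
      mul_le_mul hρ.2 hlip (by linarith) (le_of_lt hr₂)
    have hC₂γ : C₂ * γ = 2 * (γ - 1) * (r₂ * L) := by
      rw [hC₂]; field_simp
    rw [hC₂γ]
    nlinarith [h1, hγ1]
  have hmono : MonotoneOn F (Icc ρ r₂) :=
    monotoneOn_of_deriv_nonneg (convex_Icc _ _) hcont.continuousOn
      (fun x hx => by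
        rw [interior_Icc] at hx
        exact ((hderiv x (lt_of_le_of_lt hρ0 hx.1)).differentiableAt).differentiableWithinAt)
      hsign_pos
  have hanti : AntitoneOn F (Icc r₁ ρ) :=
    antitoneOn_of_deriv_nonpos (convex_Icc _ _) hcont.continuousOn
      (fun x hx => by
        rw [interior_Icc] at hx
        exact ((hderiv x (lt_of_le_of_lt hr₁ hx.1)).differentiableAt).differentiableWithinAt)
      hsign_neg
  have hFR : 0 ≤ F R := by
    rcases le_total ρ R with h | h
    · have := hmono ⟨le_rfl, hρ.2⟩ ⟨h, hR.2⟩ h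
      linarith
    · have := hanti ⟨hR.1, h⟩ ⟨hρ.1, le_rfl⟩ h
      linarith
  simp only [hF] at hFR
  linarith

set_option maxHeartbeats 1000000 in
theorem stmt5 (d : ℕ) (γ r₁ r₂ v : ℝ) (hγ : 1 < γ) (hr₁ : 0 ≤ r₁) (hr₁₂ : r₁ < r₂)
    (hvac : γ < 2 → 0 < r₁) (hv : 0 < v) :
    ∃ C : ℝ, 0 < C ∧ ∀ ρ R : ℝ, ρ ∈ Icc r₁ r₂ → R ∈ Icc r₁ r₂ →
      ∀ u U : EuclideanSpace ℝ (Fin d), ‖u‖ ≤ v → ‖U‖ ≤ v →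
        ‖(2⁻¹ * ρ * ‖u - U‖ ^ 2) • u
            - ((γ / (γ - 1)) * (R ^ (γ - 1) - ρ ^ (γ - 1)) * ρ) • u
            + (R ^ γ - ρ ^ γ) • U‖
          ≤ C * (2⁻¹ * ρ * ‖u - U‖ ^ 2
              + R ^ γ - (γ / (γ - 1)) * ρ * R ^ (γ - 1) + (1 / (γ - 1)) * ρ ^ γ) := by
  obtain ⟨C₂, hC₂pos, hkey⟩ := key_aux γ r₁ r₂ hγ hr₁ hr₁₂ hvac
  have hγ1 : (0:ℝ) < γ - 1 := by linarith
  have hc₁pos : 0 < γ / (γ - 1) := by positivity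
  refine ⟨v + 1 + 2⁻¹ * (γ / (γ - 1)) ^ 2 * C₂, by positivity, ?_⟩
  intro ρ R hρ hR u U hu hU
  have hρ0 : 0 ≤ ρ := le_trans hr₁ hρ.1
  set c₁ : ℝ := γ / (γ - 1) with hc₁
  set K : ℝ := 2⁻¹ * ρ * ‖u - U‖ ^ 2 with hKdef
  set P : ℝ := R ^ γ - c₁ * ρ * R ^ (γ - 1) + 1 / (γ - 1) * ρ ^ γ with hPdef
  set b : ℝ := c₁ * (R ^ (γ - 1) - ρ ^ (γ - 1)) * ρ with hbdef
  have hK0 : 0 ≤ K := by positivity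
  have hkey' : ρ * (R ^ (γ - 1) - ρ ^ (γ - 1)) ^ 2 ≤ C₂ * P := hkey ρ hρ R hR
  have hP0 : 0 ≤ P := by
    nlinarith [mul_nonneg hρ0 (sq_nonneg (R ^ (γ - 1) - ρ ^ (γ - 1)))]
  have hscal : R ^ γ - ρ ^ γ - b = P := by
    have h1 := rpow_sub_one_mul hρ0 hγ
    have hdd : γ / (γ - 1) - 1 / (γ - 1) = 1 := by
      field_simp
    rw [hbdef, hPdef, hc₁]
    linear_combination (γ / (γ - 1)) * h1 + ρ ^ γ * hdd
  have hvec : K • u - b • u + (R ^ γ - ρ ^ γ) • U = K • u - b • (u - U) + P • U := by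
    rw [← hscal]
    module
  rw [hvec]
  have hnorm : ‖K • u - b • (u - U) + P • U‖ ≤ K * ‖u‖ + |b| * ‖u - U‖ + P * ‖U‖ := by
    calc ‖K • u - b • (u - U) + P • U‖ ≤ ‖K • u - b • (u - U)‖ + ‖P • U‖ := norm_add_le _ _
      _ ≤ ‖K • u‖ + ‖b • (u - U)‖ + ‖P • U‖ := by linarith [norm_sub_le (K • u) (b • (u - U))]
      _ = K * ‖u‖ + |b| * ‖u - U‖ + P * ‖U‖ := by
          rw [norm_smul, norm_smul, norm_smul, Real.norm_eq_abs, Real.norm_eq_abs,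
            Real.norm_eq_abs, abs_of_nonneg hK0, abs_of_nonneg hP0]
  have hb : |b| * ‖u - U‖ ≤ K + 2⁻¹ * c₁ ^ 2 * (ρ * (R ^ (γ - 1) - ρ ^ (γ - 1)) ^ 2) := by
    rw [hbdef, abs_mul, abs_mul, abs_of_nonneg hρ0, abs_of_nonneg hc₁pos.le, hKdef]
    have hw : 0 ≤ ‖u - U‖ := norm_nonneg _
    rw [show (R ^ (γ - 1) - ρ ^ (γ - 1)) ^ 2 = |R ^ (γ - 1) - ρ ^ (γ - 1)| ^ 2 from
      (sq_abs _).symm]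
    nlinarith [mul_nonneg hρ0 (sq_nonneg (‖u - U‖ - c₁ * |R ^ (γ - 1) - ρ ^ (γ - 1)|))]
  have hKu : K * ‖u‖ ≤ K * v := mul_le_mul_of_nonneg_left hu hK0
  have hPU : P * ‖U‖ ≤ P * v := mul_le_mul_of_nonneg_left hU hP0
  have hRHS : 2⁻¹ * ρ * ‖u - U‖ ^ 2 + R ^ γ - γ / (γ - 1) * ρ * R ^ (γ - 1)
      + 1 / (γ - 1) * ρ ^ γ = K + P := by rw [hKdef, hPdef, hc₁]; ring
  rw [hRHS]
  have hmid : 2⁻¹ * c₁ ^ 2 * (ρ * (R ^ (γ - 1) - ρ ^ (γ - 1)) ^ 2) ≤ 2⁻¹ * c₁ ^ 2 * (C₂ * P) :=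
    mul_le_mul_of_nonneg_left hkey' (by positivity)
  clear_value b P K c₁
  calc ‖K • u - b • (u - U) + P • U‖ ≤ K * ‖u‖ + |b| * ‖u - U‖ + P * ‖U‖ := hnorm
    _ ≤ K * v + (K + 2⁻¹ * c₁ ^ 2 * (C₂ * P)) + P * v := by linarith
    _ ≤ (v + 1 + 2⁻¹ * c₁ ^ 2 * C₂) * (K + P) := by
        nlinarith [mul_nonneg (mul_nonneg (mul_nonneg (by norm_num : (0:ℝ) ≤ 2⁻¹)
          (sq_nonneg c₁)) hC₂pos.le) hK0, hP0]
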